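/- Let G be a finite group with |G| invertible in R. The idempotents e_H^G ∈ RB(G), for H running over a set of representatives of conjugacy classes of subgroups of G, are orthogonal idempotents whose sum is the identity element [G/G] of RB(G). -/

import Mathlib

set_option linter.unusedSectionVars false
open Finset

section Aux
variable {G : Type} [Group G] [Fintype G]

private lemma conj_map_le_iff (g : G) (H K : Subgroup G) :
    Subgroup.map (MulAut.conj g).toMonoidHom H ≤ K ↔ ∀ h ∈ H, g * h * g⁻¹ ∈ K := by
  simp [Subgroup.map_le_iff_le_comap, SetLike.le_def, Subgroup.mem_comap,
    MulAut.conj_apply]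

private lemma conj_map_eq_iff_mem_normalizer (g : G) (H : Subgroup G) :
    Subgroup.map (MulAut.conj g).toMonoidHom H = H ↔ g ∈ Subgroup.normalizer (H : Set G) := by
  rw [Subgroup.mem_normalizer_iff]
  constructor
  · intro h n
    constructor
    · intro hn; rw [← h]; exact ⟨n, hn, rfl⟩
    · intro hn
      rw [← h] at hn
      obtain ⟨m, hm, hme⟩ := hn
      simp only [MulEquiv.coe_toMonoidHom, MulAut.conj_apply] at hme
      have : m = n := mul_left_cancel (mul_right_cancel hme)
      rwa [← this]
  · intro h
    apply le_antisymm
    · intro x hx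
      obtain ⟨m, hm, rfl⟩ := hx
      exact (h m).mp hm
    · intro x hx
      refine ⟨g⁻¹ * x * g, ?_, ?_⟩
      · have := (h (g⁻¹ * x * g)).mpr
        apply this
        group
        simpa using hx
      · simp [MulAut.conj_apply]; group

-- cardinality of map under conj
private lemma card_conj_map (g : G) (H : Subgroup G) :
    Nat.card (Subgroup.map (MulAut.conj g).toMonoidHom H) = Nat.card H :=
  Nat.card_congr (H.equivMapOfInjective _ (MulAut.conj g).injective).toEquiv.symm

end Aux

section Aux2
variable {G : Type} [Group G] [Fintype G]

private lemma fix_iff (H K : Subgroup G) (g : G) :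
    (∀ h ∈ H, h • (QuotientGroup.mk g : G ⧸ K) = QuotientGroup.mk g)
      ↔ Subgroup.map (MulAut.conj g⁻¹).toMonoidHom H ≤ K := by
  rw [conj_map_le_iff]
  have key : ∀ h : G, (h • (QuotientGroup.mk g : G ⧸ K) = QuotientGroup.mk g)
      ↔ g⁻¹ * h⁻¹ * g ∈ K := by
    intro h
    rw [MulAction.Quotient.smul_mk, QuotientGroup.eq]
    simp [smul_eq_mul, mul_inv_rev, mul_assoc]
  constructor
  · intro hf h hh
    have := (key h⁻¹).mp (hf h⁻¹ (inv_mem hh))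
    simpa [mul_assoc] using this
  · intro hf h hh
    rw [key h]
    have := hf h⁻¹ (inv_mem hh)
    simpa [mul_assoc] using this

private lemma card_count (H K : Subgroup G) :
    Nat.card {g : G // Subgroup.map (MulAut.conj g⁻¹).toMonoidHom H ≤ K}
      = Nat.card {x : G ⧸ K // ∀ h ∈ H, h • x = x} * Nat.card K := by
  classical
  set p : G ⧸ K → Prop := fun x => ∀ h ∈ H, h • x = x with hp
  have e1 : {g : G // Subgroup.map (MulAut.conj g⁻¹).toMonoidHom H ≤ K}
      ≃ {g : G // p (QuotientGroup.mk g)} :=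
    Equiv.subtypeEquivRight (fun g => (fix_iff H K g).symm)
  have e2 : {g : G // p (QuotientGroup.mk g)}
      ≃ Σ x : {x : G ⧸ K // p x}, {g : G // QuotientGroup.mk g = x.1} :=
    { toFun := fun g => ⟨⟨QuotientGroup.mk g.1, g.2⟩, ⟨g.1, rfl⟩⟩
      invFun := fun s => ⟨s.2.1, by rw [s.2.2]; exact s.1.2⟩
      left_inv := fun g => rfl
      right_inv := fun s => by
        refine Sigma.ext (Subtype.ext s.2.2) ?_
        refine (Subtype.heq_iff_coe_eq ?_).mpr rfl
        intro g'
        constructor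
        · intro hh; exact hh.trans s.2.2
        · intro hh; exact hh.trans s.2.2.symm }
  have e3 : ∀ x : G ⧸ K, {g : G // QuotientGroup.mk g = x} ≃ K := by
    intro x
    have hout : QuotientGroup.mk (Quotient.out x) = x := QuotientGroup.out_eq' x
    exact
      { toFun := fun g => ⟨(Quotient.out x)⁻¹ * g.1, by
          rw [← QuotientGroup.eq, hout, g.2]⟩
        invFun := fun k => ⟨(Quotient.out x) * k.1, by
          rw [QuotientGroup.mk_mul_of_mem _ k.2, hout]⟩
        left_inv := fun g => Subtype.ext (by simp)
        right_inv := fun k => Subtype.ext (by simp) }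
  have e4 : (Σ x : {x : G ⧸ K // p x}, {g : G // QuotientGroup.mk g = x.1})
      ≃ {x : G ⧸ K // p x} × K :=
    (Equiv.sigmaCongrRight (fun x : {x : G ⧸ K // p x} => e3 x.1)).trans (Equiv.sigmaEquivProd _ _)
  rw [Nat.card_congr (e1.trans (e2.trans e4)), Nat.card_prod]

private lemma mobius_delta [Fintype (Subgroup G)] [∀ K H : Subgroup G, Decidable (K ≤ H)]
    [DecidableEq (Subgroup G)]
    (mu : Subgroup G → Subgroup G → ℤ) (hmuSelf : ∀ H : Subgroup G, mu H H = 1)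
    (hmuRec : ∀ K H : Subgroup G, K < H →
      (∑ L ∈ univ.filter (fun L : Subgroup G => K ≤ L ∧ L ≤ H), mu L H) = 0)
    (M H0 : Subgroup G) :
    (∑ L ∈ univ.filter (fun L : Subgroup G => M ≤ L ∧ L ≤ H0), mu L H0)
      = if M = H0 then 1 else 0 := by
  classical
  by_cases h : M = H0
  · subst h
    rw [if_pos rfl]
    have hf : univ.filter (fun L : Subgroup G => M ≤ L ∧ L ≤ M) = {M} := by
      ext L
      simp only [mem_filter, mem_univ, true_and, mem_singleton]
      exact ⟨fun h => le_antisymm h.2 h.1, fun h => by subst h; exact ⟨le_rfl, le_rfl⟩⟩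
    rw [hf, Finset.sum_singleton, hmuSelf]
  · rw [if_neg h]
    by_cases hle : M ≤ H0
    · exact hmuRec M H0 (lt_of_le_of_ne hle h)
    · apply Finset.sum_eq_zero
      intro L hL
      simp only [mem_filter] at hL
      exact absurd (hL.2.1.trans hL.2.2) hle

end Aux2

/-- Let `G` be a finite group with `|G|` invertible in `R`.  In the Burnside algebra
`A = RB(G)` (axiomatized as in the paper by conjugation-invariant classes `b K = [G/K]`, a
basis indexed by a complete irredundant set `sG` of representatives of conjugacy classes of
subgroups, `[G/G] = 1`, and mark algebra homomorphisms counting fixed points), the elements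
`e i = e_{sG i}^G = (1/|N_G(sG i)|) Σ_{K ≤ sG i} |K| μ(K, sG i) [G/K]` (with `μ` the Möbius
function of the subgroup lattice) are orthogonal idempotents whose sum is the identity
`[G/G]` of `RB(G)`. -/
theorem burnside_idempotents_orthogonal_sum_one
    {R : Type} [CommRing R] {G : Type} [Group G] [Fintype G]
    [Fintype (Subgroup G)] [∀ K H : Subgroup G, Decidable (K ≤ H)]
    {A : Type} [CommRing A] [Algebra R A]
    {ι : Type} [Fintype ι] (sG : ι → Subgroup G)
    (hreps : ∀ H : Subgroup G, ∃ (i : ι) (g : G),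
      Subgroup.map (MulAut.conj g).toMonoidHom (sG i) = H)
    (hirr : ∀ i j : ι,
      (∃ g : G, Subgroup.map (MulAut.conj g).toMonoidHom (sG i) = sG j) → i = j)
    (b : Subgroup G → A)
    (hbconj : ∀ (g : G) (K : Subgroup G),
      b (Subgroup.map (MulAut.conj g).toMonoidHom K) = b K)
    (ℬ : Module.Basis ι R A) (hbℬ : ∀ i : ι, b (sG i) = ℬ i)
    (itop : ι) (hitop : sG itop = ⊤) (hone : ℬ itop = 1)
    (Φ : Subgroup G → (A →ₐ[R] R))
    (hΦ : ∀ H K : Subgroup G,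
      Φ H (b K) = (Nat.card {x : G ⧸ K // ∀ h ∈ H, h • x = x} : R))
    (hG : IsUnit (Fintype.card G : R))
    (mu : Subgroup G → Subgroup G → ℤ)
    (hmuSelf : ∀ H : Subgroup G, mu H H = 1)
    (hmuRec : ∀ K H : Subgroup G, K < H →
      (∑ L ∈ Finset.univ.filter (fun L : Subgroup G => K ≤ L ∧ L ≤ H), mu L H) = 0)
    (nInv : ι → R)
    (hnInv : ∀ i : ι, nInv i * ((Nat.card (Subgroup.normalizer (sG i : Set G)) : R)) = 1)
    (e : ι → A)
    (he : ∀ i : ι,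
      e i = nInv i • ∑ K ∈ Finset.univ.filter (fun K : Subgroup G => K ≤ sG i),
        (((Nat.card K : ℤ) * mu K (sG i)) • b K)) :
    (∀ i : ι, e i * e i = e i)
      ∧ (∀ i j : ι, i ≠ j → e i * e j = 0)
      ∧ (∑ i : ι, e i = 1) := by
  classical
  -- every subgroup has invertible cardinality in R
  have unitCard : ∀ K : Subgroup G, IsUnit ((Nat.card K : R)) := by
    intro K
    have hdvd : (Nat.card K : ℕ) ∣ Fintype.card G := by
      rw [← Nat.card_eq_fintype_card]
      exact Subgroup.card_subgroup_dvd_card K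
    exact isUnit_of_dvd_unit (Nat.cast_dvd_cast hdvd) hG
  -- value of marks on the idempotents
  have hPhiE : ∀ (H : Subgroup G) (i : ι), Φ H (e i)
      = nInv i * (Nat.card {g : G //
          Subgroup.map (MulAut.conj g).toMonoidHom H = sG i} : R) := by
    intro H i
    rw [he i, map_smul, smul_eq_mul, map_sum]
    congr 1
    have hterm : ∀ K : Subgroup G, Φ H (((Nat.card K : ℤ) * mu K (sG i)) • b K)
        = (mu K (sG i) : R) * ((Nat.card K : R)
            * (Nat.card {x : G ⧸ K // ∀ h ∈ H, h • x = x} : R)) := by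
      intro K
      rw [map_zsmul, zsmul_eq_mul, hΦ]
      push_cast
      ring
    rw [Finset.sum_congr rfl (fun K _ => hterm K)]
    have hcount : ∀ K : Subgroup G,
        (Nat.card K : R) * (Nat.card {x : G ⧸ K // ∀ h ∈ H, h • x = x} : R)
        = ∑ g : G, (if Subgroup.map (MulAut.conj g⁻¹).toMonoidHom H ≤ K
            then (1 : R) else 0) := by
      intro K
      rw [← Nat.cast_mul, mul_comm (Nat.card K), ← card_count H K,
        Nat.card_eq_fintype_card, Fintype.card_subtype, Finset.card_filter]
      push_cast
      rfl
    rw [Finset.sum_congr rfl (fun K _ => by rw [hcount K, Finset.mul_sum]),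
      Finset.sum_comm]
    have hinner : ∀ g : G, (∑ K ∈ univ.filter (fun K : Subgroup G => K ≤ sG i),
        (mu K (sG i) : R) * (if Subgroup.map (MulAut.conj g⁻¹).toMonoidHom H ≤ K
          then (1:R) else 0))
        = if Subgroup.map (MulAut.conj g⁻¹).toMonoidHom H = sG i
          then (1:R) else 0 := by
      intro g
      set Mg := Subgroup.map (MulAut.conj g⁻¹).toMonoidHom H with hMg
      rw [Finset.sum_filter]
      have h2 : ∀ K : Subgroup G,
          (if K ≤ sG i then
            ((mu K (sG i) : R) * (if Mg ≤ K then (1:R) else 0)) else 0)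
          = if Mg ≤ K ∧ K ≤ sG i then ((mu K (sG i) : ℤ) : R) else 0 := by
        intro K
        by_cases h1 : K ≤ sG i <;> by_cases hq : Mg ≤ K <;> simp [h1, hq]
      rw [Finset.sum_congr rfl (fun K _ => h2 K), ← Finset.sum_filter,
        ← Int.cast_sum, mobius_delta mu hmuSelf hmuRec Mg (sG i)]
      split_ifs <;> simp
    rw [Finset.sum_congr rfl (fun g _ => hinner g)]
    -- reindex g ↦ g⁻¹ and count
    have hre := Fintype.sum_equiv (Equiv.inv G)
      (fun g => if Subgroup.map (MulAut.conj g⁻¹).toMonoidHom H = sG i then (1:R) else 0)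
      (fun g => if Subgroup.map (MulAut.conj g).toMonoidHom H = sG i then (1:R) else 0)
      (fun g => rfl)
    rw [hre, Finset.sum_boole]
    congr 1
    rw [Nat.card_eq_fintype_card, Fintype.card_subtype]
  -- marks separate the idempotents
  have hdelta : ∀ i j : ι, Φ (sG j) (e i) = if i = j then (1:R) else 0 := by
    intro i j
    rw [hPhiE]
    by_cases hij : i = j
    · subst hij
      rw [if_pos rfl]
      have hcongr : Nat.card {g : G //
            Subgroup.map (MulAut.conj g).toMonoidHom (sG i) = sG i}
          = Nat.card (Subgroup.normalizer (sG i : Set G)) :=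
        Nat.card_congr (Equiv.subtypeEquivRight
          (fun g => conj_map_eq_iff_mem_normalizer g (sG i)))
      rw [hcongr, hnInv i]
    · rw [if_neg hij]
      have hemp : IsEmpty {g : G //
          Subgroup.map (MulAut.conj g).toMonoidHom (sG j) = sG i} := by
        constructor
        rintro ⟨g, hg⟩
        exact hij (hirr j i ⟨g, hg⟩).symm
      rw [Nat.card_of_isEmpty, Nat.cast_zero, mul_zero]
  -- the marks at representatives are jointly injective
  have hM : ∀ j k : ι, Φ (sG j) (ℬ k)
      = (Nat.card {x : G ⧸ (sG k) // ∀ h ∈ sG j, h • x = x} : R) := by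
    intro j k
    rw [← hbℬ, hΦ]
  have hinj : ∀ a : A, (∀ j : ι, Φ (sG j) a = 0) → a = 0 := by
    intro a ha
    have hrepr : ∀ j : ι, ℬ.repr a j = 0 := by
      by_contra hc
      push_neg at hc
      obtain ⟨j0, hj0⟩ := hc
      set S : Finset ι := univ.filter (fun k => ℬ.repr a k ≠ 0) with hS
      have hSne : S.Nonempty := ⟨j0, by simp [hS, hj0]⟩
      obtain ⟨j, hjS, hjmax⟩ := Finset.exists_max_image S (fun k => Nat.card (sG k)) hSne
      have hexp : Φ (sG j) a = ∑ k : ι, ℬ.repr a k * Φ (sG j) (ℬ k) := by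
        conv_lhs => rw [← Module.Basis.sum_repr ℬ a]
        rw [map_sum]
        exact Finset.sum_congr rfl (fun k _ => by rw [map_smul, smul_eq_mul])
      have hsum : ∑ k : ι, ℬ.repr a k * Φ (sG j) (ℬ k) = 0 := by
        rw [← hexp, ha j]
      have hoff : ∀ k : ι, k ∈ univ → k ≠ j → ℬ.repr a k * Φ (sG j) (ℬ k) = 0 := by
        intro k _ hkj
        by_cases hk0 : ℬ.repr a k = 0
        · rw [hk0, zero_mul]
        · have hkS : k ∈ S := by simp [hS, hk0]
          have hcardle : Nat.card (sG k) ≤ Nat.card (sG j) := hjmax k hkS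
          have hzero : Φ (sG j) (ℬ k) = 0 := by
            rw [hM]
            by_contra hne
            have hne' : Nat.card {x : G ⧸ (sG k) // ∀ h ∈ sG j, h • x = x} ≠ 0 := by
              intro h0
              rw [h0, Nat.cast_zero] at hne
              exact hne rfl
            have hnonempty : Nonempty {x : G ⧸ (sG k) // ∀ h ∈ sG j, h • x = x} := by
              rcases Nat.card_eq_zero.not.mp hne' |> not_or.mp with ⟨h1, _⟩
              exact not_isEmpty_iff.mp h1
            obtain ⟨⟨x, hx⟩⟩ := hnonempty
            obtain ⟨g, rfl⟩ := Quotient.exists_rep x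
            have hle : Subgroup.map (MulAut.conj g⁻¹).toMonoidHom (sG j) ≤ sG k :=
              (fix_iff (sG j) (sG k) g).mp hx
            have heq : Subgroup.map (MulAut.conj g⁻¹).toMonoidHom (sG j) = sG k :=
              Subgroup.eq_of_le_of_card_ge hle
                (hcardle.trans (card_conj_map g⁻¹ (sG j)).symm.le)
            exact hkj (hirr j k ⟨g⁻¹, heq⟩).symm
          rw [hzero, mul_zero]
      rw [Finset.sum_eq_single j hoff (fun h => absurd (Finset.mem_univ j) h)] at hsum
      have hdiag : IsUnit (Φ (sG j) (ℬ j)) := by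
        rw [hM]
        have hm : (Nat.card {x : G ⧸ (sG j) // ∀ h ∈ sG j, h • x = x} : R)
            * (Nat.card (sG j) : R) = (Nat.card (Subgroup.normalizer (sG j : Set G)) : R) := by
          rw [← Nat.cast_mul, ← card_count (sG j) (sG j)]
          congr 1
          apply Nat.card_congr
          apply Equiv.subtypeEquivRight
          intro g
          constructor
          · intro hle
            have heq : Subgroup.map (MulAut.conj g⁻¹).toMonoidHom (sG j) = sG j :=
              Subgroup.eq_of_le_of_card_ge hle (card_conj_map g⁻¹ (sG j)).symm.le
            exact inv_mem_iff.mp ((conj_map_eq_iff_mem_normalizer g⁻¹ (sG j)).mp heq)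
          · intro hg
            exact le_of_eq ((conj_map_eq_iff_mem_normalizer g⁻¹ (sG j)).mpr
              (inv_mem_iff.mpr hg))
        exact isUnit_of_mul_isUnit_left (hm ▸ unitCard (Subgroup.normalizer (sG j : Set G)))
      have : ℬ.repr a j = 0 := (hdiag.mul_left_eq_zero).mp hsum
      have hjS' : ℬ.repr a j ≠ 0 := by
        have := hjS
        simp [hS] at this
        exact this
      exact hjS' this
    apply ℬ.repr.injective
    rw [map_zero]
    exact Finsupp.ext hrepr
  refine ⟨?_, ?_, ?_⟩
  · intro i
    have h := hinj (e i * e i - e i) (fun j => by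
      rw [map_sub, map_mul, hdelta i j]
      split_ifs <;> simp)
    exact sub_eq_zero.mp h
  · intro i j hij
    apply hinj (e i * e j)
    intro k
    rw [map_mul, hdelta i k, hdelta j k]
    by_cases h1 : i = k
    · by_cases h2 : j = k
      · exact absurd (h1.trans h2.symm) hij
      · simp [h1, h2]
    · simp [h1]
  · have h := hinj ((∑ i : ι, e i) - 1) (fun j => by
      rw [map_sub, map_one, map_sum,
        Finset.sum_congr rfl (fun i _ => hdelta i j)]
      simp)
    exact sub_eq_zero.mp h
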